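/- Let a > 0 and let B be the 4 × 4 matrix with rows (2, −1, 0, 0), (−a, 2a, −a, 0), (0, −1, 2, −1), (0, 0, −a, 2a). Then the characteristic polynomial of B equals (X² − 2(a+1)X + a(5+√5)/2) · (X² − 2(a+1)X + a(5−√5)/2). Equivalently, the eigenvalues of B are a + 1 ± √(1 − ((1+√5)/2)a + a²) and a + 1 ± √(1 − ((1−√5)/2)a + a²). -/

import Mathlib

open Polynomial


theorem det_fin_four' {R : Type*} [CommRing R] (A : Matrix (Fin 4) (Fin 4) R) :
    A.det =
      A 0 0 * A 1 1 * A 2 2 * A 3 3 - A 0 0 * A 1 1 * A 2 3 * A 3 2 -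
      A 0 0 * A 1 2 * A 2 1 * A 3 3 + A 0 0 * A 1 2 * A 2 3 * A 3 1 +
      A 0 0 * A 1 3 * A 2 1 * A 3 2 - A 0 0 * A 1 3 * A 2 2 * A 3 1 -
      A 0 1 * A 1 0 * A 2 2 * A 3 3 + A 0 1 * A 1 0 * A 2 3 * A 3 2 +
      A 0 1 * A 1 2 * A 2 0 * A 3 3 - A 0 1 * A 1 2 * A 2 3 * A 3 0 -
      A 0 1 * A 1 3 * A 2 0 * A 3 2 + A 0 1 * A 1 3 * A 2 2 * A 3 0 +
      A 0 2 * A 1 0 * A 2 1 * A 3 3 - A 0 2 * A 1 0 * A 2 3 * A 3 1 -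
      A 0 2 * A 1 1 * A 2 0 * A 3 3 + A 0 2 * A 1 1 * A 2 3 * A 3 0 +
      A 0 2 * A 1 3 * A 2 0 * A 3 1 - A 0 2 * A 1 3 * A 2 1 * A 3 0 -
      A 0 3 * A 1 0 * A 2 1 * A 3 2 + A 0 3 * A 1 0 * A 2 2 * A 3 1 +
      A 0 3 * A 1 1 * A 2 0 * A 3 2 - A 0 3 * A 1 1 * A 2 2 * A 3 0 -
      A 0 3 * A 1 2 * A 2 0 * A 3 1 + A 0 3 * A 1 2 * A 2 1 * A 3 0 := by
  rw [Matrix.det_succ_row_zero]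
  simp [Fin.sum_univ_succ, Matrix.det_fin_three, Fin.succAbove, Matrix.submatrix,
    show (Fin.succ 2 : Fin 4) = 3 from rfl,
    show ((2 : Fin 3).castSucc : Fin 4) = 2 from rfl]
  ring

/-- For `p = 5` (10-particle alternating chain), the characteristic polynomial
of the matrix `B = M⁻¹K` of the reduced system, with rows `(2, -1, 0, 0)`,
`(-a, 2a, -a, 0)`, `(0, -1, 2, -1)`, `(0, 0, -a, 2a)`, equals
`(X² - 2(a+1)X + a(5+√5)/2)(X² - 2(a+1)X + a(5-√5)/2)`; equivalently its roots
(the squared normal-mode frequencies) are `a + 1 ± √(1 - ((1+√5)/2)a + a²)` and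
`a + 1 ± √(1 - ((1-√5)/2)a + a²)`. -/
theorem charpoly_ten_particle_reduced (a : ℝ) (ha : 0 < a) :
    (Matrix.charpoly
        (!![(2 : ℝ), -1, 0, 0;
            -a, 2 * a, -a, 0;
            0, -1, 2, -1;
            0, 0, -a, 2 * a]) =
      (X ^ 2 - C (2 * (a + 1)) * X + C (a * (5 + Real.sqrt 5) / 2)) *
        (X ^ 2 - C (2 * (a + 1)) * X + C (a * (5 - Real.sqrt 5) / 2))) ∧
    ((Matrix.charpoly
        (!![(2 : ℝ), -1, 0, 0;
            -a, 2 * a, -a, 0;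
            0, -1, 2, -1;
            0, 0, -a, 2 * a])).roots =
      {a + 1 + Real.sqrt (1 - (1 + Real.sqrt 5) / 2 * a + a ^ 2),
        a + 1 - Real.sqrt (1 - (1 + Real.sqrt 5) / 2 * a + a ^ 2),
        a + 1 + Real.sqrt (1 - (1 - Real.sqrt 5) / 2 * a + a ^ 2),
        a + 1 - Real.sqrt (1 - (1 - Real.sqrt 5) / 2 * a + a ^ 2)}) := by
  have h5 : Real.sqrt 5 * Real.sqrt 5 = 5 := Real.mul_self_sqrt (by norm_num)
  have hd1 : (0:ℝ) ≤ 1 - (1 + Real.sqrt 5) / 2 * a + a ^ 2 := by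
    nlinarith [sq_nonneg (a - (1 + Real.sqrt 5) / 4), Real.sqrt_nonneg 5, h5]
  have hd2 : (0:ℝ) ≤ 1 - (1 - Real.sqrt 5) / 2 * a + a ^ 2 := by
    nlinarith [Real.sqrt_nonneg 5, sq_nonneg a, ha.le, h5]
  have hs1 : Real.sqrt (1 - (1 + Real.sqrt 5) / 2 * a + a ^ 2) *
      Real.sqrt (1 - (1 + Real.sqrt 5) / 2 * a + a ^ 2) =
      1 - (1 + Real.sqrt 5) / 2 * a + a ^ 2 := Real.mul_self_sqrt hd1
  have hs2 : Real.sqrt (1 - (1 - Real.sqrt 5) / 2 * a + a ^ 2) *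
      Real.sqrt (1 - (1 - Real.sqrt 5) / 2 * a + a ^ 2) =
      1 - (1 - Real.sqrt 5) / 2 * a + a ^ 2 := Real.mul_self_sqrt hd2
  constructor
  · apply Polynomial.funext
    intro x
    rw [Matrix.charpoly, ← Polynomial.coe_evalRingHom, RingHom.map_det, det_fin_four']
    simp [Matrix.charmatrix_apply, Matrix.map_apply, Matrix.diagonal_apply,
      Matrix.one_apply, Matrix.vecHead, Matrix.vecTail]
    linear_combination (a ^ 2 / 4) * h5
  · have hfact : Matrix.charpoly
        (!![(2 : ℝ), -1, 0, 0;
            -a, 2 * a, -a, 0;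
            0, -1, 2, -1;
            0, 0, -a, 2 * a]) =
        (({a + 1 + Real.sqrt (1 - (1 + Real.sqrt 5) / 2 * a + a ^ 2),
          a + 1 - Real.sqrt (1 - (1 + Real.sqrt 5) / 2 * a + a ^ 2),
          a + 1 + Real.sqrt (1 - (1 - Real.sqrt 5) / 2 * a + a ^ 2),
          a + 1 - Real.sqrt (1 - (1 - Real.sqrt 5) / 2 * a + a ^ 2)} : Multiset ℝ).map
            fun r => X - C r).prod := by
      apply Polynomial.funext
      intro x
      rw [Matrix.charpoly, ← Polynomial.coe_evalRingHom, RingHom.map_det, det_fin_four']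
      simp [Matrix.charmatrix_apply, Matrix.map_apply, Matrix.diagonal_apply,
        Matrix.one_apply, Matrix.vecHead, Matrix.vecTail]
      linear_combination (a ^ 2 / 4) * h5 +
        ((x - (a + 1)) ^ 2 - (1 - (1 - Real.sqrt 5) / 2 * a + a ^ 2)) * hs1 +
        ((x - (a + 1 + Real.sqrt (1 - (1 + Real.sqrt 5) / 2 * a + a ^ 2))) *
          (x - (a + 1 - Real.sqrt (1 - (1 + Real.sqrt 5) / 2 * a + a ^ 2)))) * hs2
    rw [hfact, Polynomial.roots_multiset_prod_X_sub_C]
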